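/- Suppose ρ^AI is consistent with the Luce Alignment Model with parameters (u, v, α) where u(x) = v(x) = 1 for a fixed alternative x. Let y, z, t be alternatives such that x, y, z, t are pairwise distinct, let S = {x,y,z,t} and T = {x,y}, and suppose ρ^AI(x,S')·u(y) ≠ ρ^AI(y,S') for every S' with T ⊆ S' ⊆ S. Then κ = u(y) satisfies the equation 1/(ρ^AI(x,S)·κ − ρ^AI(y,S)) + 1/(ρ^AI(x,T)·κ − ρ^AI(y,T)) = 1/(ρ^AI(x,S∖{t})·κ − ρ^AI(y,S∖{t})) + 1/(ρ^AI(x,S∖{z})·κ − ρ^AI(y,S∖{z})). Similarly, if ρ^AI(x,S')·v(y) ≠ ρ^AI(y,S') for every such S', then κ = v(y) satisfies the same equation. -/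

import Mathlib

open Finset

/-- A stochastic choice function: values in `[0,1]`, positive only on the menu,
and summing to one over each nonempty menu. -/
def IsSCF {X : Type*} (ρ : X → Finset X → ℝ) : Prop :=
  ∀ S : Finset X, S.Nonempty →
    (∀ x, 0 ≤ ρ x S ∧ ρ x S ≤ 1) ∧ (∀ x, 0 < ρ x S → x ∈ S) ∧ (∑ x ∈ S, ρ x S) = 1

/-- Independence of Irrelevant Alternatives. -/
def IIA {X : Type*} [DecidableEq X] (ρ : X → Finset X → ℝ) : Prop :=
  ∀ S T : Finset X, S.Nonempty → T.Nonempty →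
    ∀ x ∈ S ∩ T, ∀ y ∈ S ∩ T, ρ x S * ρ y T = ρ x T * ρ y S

/-- Own instability `Δ_{xy}(S,T|ρ)`. -/
noncomputable def Delta {X : Type*} (ρ : X → Finset X → ℝ) (x y : X) (S T : Finset X) : ℝ :=
  ρ x S * ρ y T - ρ y S * ρ x T

/-- Cross instability `Γ_{xy}(S,T|ρ,ρ')`. -/
noncomputable def Gamma {X : Type*} (ρ ρ' : X → Finset X → ℝ) (x y : X) (S T : Finset X) : ℝ :=
  ρ x S * ρ' y T - ρ y S * ρ' x T

/-- Composite instability `Φ_{xy}(S,T|ρ,ρ')`. -/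
noncomputable def Phi {X : Type*} (ρ ρ' : X → Finset X → ℝ) (x y : X) (S T : Finset X) : ℝ :=
  Gamma ρ ρ' x y S T + Gamma ρ' ρ x y S T

/-- The Luce rule with utility `u`. -/
noncomputable def LuceRule {X : Type*} (u : X → ℝ) (x : X) (S : Finset X) : ℝ :=
  u x / ∑ y ∈ S, u y

/-- `ρAI` is consistent with the Luce Alignment Model with parameters `(u, v, α)`. -/
def LAM1 {X : Type*} (ρAI : X → Finset X → ℝ) (u v : X → ℝ) (α : ℝ) : Prop :=
  (∀ x, 0 < u x) ∧ (∀ x, 0 < v x) ∧ 0 ≤ α ∧ α ≤ 1 ∧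
    ∀ S : Finset X, S.Nonempty → ∀ x ∈ S,
      ρAI x S = α * (u x / ∑ y ∈ S, u y) + (1 - α) * (v x / ∑ y ∈ S, v y)

/-- The pair `(ρAI, ρH)` is consistent with the Luce Alignment Model
with parameters `(u, v, α)`. -/
def LAMpair {X : Type*} (ρAI ρH : X → Finset X → ℝ) (u v : X → ℝ) (α : ℝ) : Prop :=
  LAM1 ρAI u v α ∧
    ∀ S : Finset X, S.Nonempty → ∀ x ∈ S, ρH x S = u x / ∑ y ∈ S, u y


lemma lam_cubic_aux {X : Type*} [DecidableEq X]
    (ρ : X → Finset X → ℝ) (u v : X → ℝ) (α : ℝ)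
    (hu : ∀ a, 0 < u a) (hv : ∀ a, 0 < v a)
    (hρ : ∀ S : Finset X, S.Nonempty → ∀ a ∈ S,
      ρ a S = α * (u a / ∑ b ∈ S, u b) + (1 - α) * (v a / ∑ b ∈ S, v b))
    (x y z t : X) (hux : u x = 1) (hvx : v x = 1)
    (hxy : x ≠ y) (hxz : x ≠ z) (hxt : x ≠ t)
    (hyz : y ≠ z) (hyt : y ≠ t) (hzt : z ≠ t)
    (hne : ∀ S' : Finset X, {x, y} ⊆ S' → S' ⊆ {x, y, z, t} →
        ρ x S' * u y ≠ ρ y S') :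
    1 / (ρ x {x, y, z, t} * u y - ρ y {x, y, z, t})
        + 1 / (ρ x {x, y} * u y - ρ y {x, y})
      = 1 / (ρ x (({x, y, z, t} : Finset X) \ {t}) * u y
            - ρ y (({x, y, z, t} : Finset X) \ {t}))
        + 1 / (ρ x (({x, y, z, t} : Finset X) \ {z}) * u y
            - ρ y (({x, y, z, t} : Finset X) \ {z})) := by
  have key : ∀ M : Finset X, M.Nonempty → x ∈ M → y ∈ M →
      ρ x M * u y - ρ y M = ((1 - α) * (u y - v y)) / (∑ b ∈ M, v b) := by
    intro M hM hx hy
    have hU : (0:ℝ) < ∑ b ∈ M, u b := Finset.sum_pos (fun i _ => hu i) hM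
    have hV : (0:ℝ) < ∑ b ∈ M, v b := Finset.sum_pos (fun i _ => hv i) hM
    rw [hρ M hM x hx, hρ M hM y hy, hux, hvx]
    field_simp
    ring
  set S : Finset X := {x, y, z, t} with hS
  have hxS : x ∈ S := by simp [hS]
  have hyS : y ∈ S := by simp [hS]
  have hSne : S.Nonempty := ⟨x, hxS⟩
  have hTne : ({x, y} : Finset X).Nonempty := ⟨x, by simp⟩
  have hSt : (S \ {t}) = {x, y, z} := by
    ext a
    simp only [hS, Finset.mem_sdiff, Finset.mem_insert, Finset.mem_singleton]
    constructor
    · rintro ⟨h1, h2⟩; tauto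
    · rintro (rfl | rfl | rfl) <;> tauto
  have hSz : (S \ {z}) = {x, y, t} := by
    ext a
    simp only [hS, Finset.mem_sdiff, Finset.mem_insert, Finset.mem_singleton]
    constructor
    · rintro ⟨h1, h2⟩; tauto
    · rintro (rfl | rfl | rfl) <;> tauto
  have hStne : ({x, y, z} : Finset X).Nonempty := ⟨x, by simp⟩
  have hSzne : ({x, y, t} : Finset X).Nonempty := ⟨x, by simp⟩
  -- sums
  have hsumS : (∑ b ∈ S, v b) = v x + v y + v z + v t := by
    rw [hS]
    rw [Finset.sum_insert (by simp [hxy, hxz, hxt]),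
      Finset.sum_insert (by simp [hyz, hyt]),
      Finset.sum_insert (by simp [hzt]), Finset.sum_singleton]
    ring
  have hsumT : (∑ b ∈ ({x, y} : Finset X), v b) = v x + v y := by
    rw [Finset.sum_insert (by simp [hxy]), Finset.sum_singleton]
  have hsumSt : (∑ b ∈ ({x, y, z} : Finset X), v b) = v x + v y + v z := by
    rw [Finset.sum_insert (by simp [hxy, hxz]),
      Finset.sum_insert (by simp [hyz]), Finset.sum_singleton]
    ring
  have hsumSz : (∑ b ∈ ({x, y, t} : Finset X), v b) = v x + v y + v t := by
    rw [Finset.sum_insert (by simp [hxy, hxt]),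
      Finset.sum_insert (by simp [hyt]), Finset.sum_singleton]
    ring
  -- the constant is nonzero
  have hTsub1 : ({x, y} : Finset X) ⊆ {x, y} := le_refl _
  have hTsub2 : ({x, y} : Finset X) ⊆ S := by
    intro a ha
    simp only [Finset.mem_insert, Finset.mem_singleton] at ha
    simp only [hS, Finset.mem_insert, Finset.mem_singleton]
    tauto
  have hc : ((1 - α) * (u y - v y)) ≠ 0 := by
    intro h0
    apply hne {x, y} hTsub1 hTsub2
    have := key {x, y} hTne (by simp) (by simp)
    rw [h0, zero_div] at this
    linarith
  rw [key S hSne hxS hyS,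
    key {x, y} hTne (by simp) (by simp),
    hSt, hSz,
    key {x, y, z} hStne (by simp) (by simp),
    key {x, y, t} hSzne (by simp) (by simp),
    hsumS, hsumT, hsumSt, hsumSz,
    one_div_div, one_div_div, one_div_div, one_div_div,
    ← add_div, ← add_div]
  ring_nf

theorem lam_cubic_equation_for_utilities {X : Type*} [Fintype X] [DecidableEq X]
    (hcard : 4 ≤ Fintype.card X)
    (ρAI : X → Finset X → ℝ) (u v : X → ℝ) (α : ℝ)
    (hLAM : LAM1 ρAI u v α)
    (x : X) (hux : u x = 1) (hvx : v x = 1)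
    (y z t : X) (hxy : x ≠ y) (hxz : x ≠ z) (hxt : x ≠ t)
    (hyz : y ≠ z) (hyt : y ≠ t) (hzt : z ≠ t) :
    ((∀ S' : Finset X, {x, y} ⊆ S' → S' ⊆ {x, y, z, t} →
        ρAI x S' * u y ≠ ρAI y S') →
      1 / (ρAI x {x, y, z, t} * u y - ρAI y {x, y, z, t})
          + 1 / (ρAI x {x, y} * u y - ρAI y {x, y})
        = 1 / (ρAI x (({x, y, z, t} : Finset X) \ {t}) * u y
              - ρAI y (({x, y, z, t} : Finset X) \ {t}))
          + 1 / (ρAI x (({x, y, z, t} : Finset X) \ {z}) * u y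
              - ρAI y (({x, y, z, t} : Finset X) \ {z}))) ∧
    ((∀ S' : Finset X, {x, y} ⊆ S' → S' ⊆ {x, y, z, t} →
        ρAI x S' * v y ≠ ρAI y S') →
      1 / (ρAI x {x, y, z, t} * v y - ρAI y {x, y, z, t})
          + 1 / (ρAI x {x, y} * v y - ρAI y {x, y})
        = 1 / (ρAI x (({x, y, z, t} : Finset X) \ {t}) * v y
              - ρAI y (({x, y, z, t} : Finset X) \ {t}))
          + 1 / (ρAI x (({x, y, z, t} : Finset X) \ {z}) * v y
              - ρAI y (({x, y, z, t} : Finset X) \ {z}))) := by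
  obtain ⟨hu, hv, hα0, hα1, hρ⟩ := hLAM
  constructor
  · intro hne
    exact lam_cubic_aux ρAI u v α hu hv hρ x y z t hux hvx
      hxy hxz hxt hyz hyt hzt hne
  · intro hne
    have hρ' : ∀ S : Finset X, S.Nonempty → ∀ a ∈ S,
        ρAI a S = (1 - α) * (v a / ∑ b ∈ S, v b)
          + (1 - (1 - α)) * (u a / ∑ b ∈ S, u b) := by
      intro S hS a ha
      rw [hρ S hS a ha]; ring
    exact lam_cubic_aux ρAI v u (1 - α) hv hu hρ' x y z t hvx hux
      hxy hxz hxt hyz hyt hzt hne
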